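/- Let 2 ≤ p ≤ 4, 0 < δ₁ ≤ 1 and 0 < δ₂ ≤ 1. Let τ be a sequence in T(δ₁, δ₂) and let γ be the sequence given by γ_n = min(τ_n, n) for all n ≥ 0. Then γ is a sequence in T(δ₁, δ₂) and E_p(γ) ≥ E_p(τ). -/

import Mathlib

open MeasureTheory Real Set

/-- The kernel `K_p(τ; x)`. -/
noncomputable def Kp (p : ℝ) (τ : ℕ → ℝ) (x : ℝ) : ℝ :=
  ∑' n : ℕ, (Set.Ioo (τ n) (τ (n + 1))).indicator
    (fun y => Real.sin (p / 2 * π * (y - n)) / (π * y)) x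

/-- The quantity `E_p(τ)`. -/
noncomputable def Ep (p : ℝ) (τ : ℕ → ℝ) : ℝ :=
  ∫ x in Set.Ioi (0 : ℝ), (max 0 (Kp p τ x)) ^ 2

/-- The set of sequences `T(δ₁, δ₂)`. -/
def Tset (δ₁ δ₂ : ℝ) : Set (ℕ → ℝ) :=
  {τ | τ 0 = 0 ∧ StrictMono τ ∧ δ₁ ≤ τ 1 ∧ ∀ n, 1 ≤ n → δ₂ ≤ τ (n + 1) - τ n}

/-- The supremum `ℰ_p(δ₁, δ₂) = sup_{τ ∈ T(δ₁,δ₂)} E_p(τ)`. -/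
noncomputable def Esup (p δ₁ δ₂ : ℝ) : ℝ := sSup (Ep p '' Tset δ₁ δ₂)

set_option linter.unusedSectionVars false
set_option linter.unusedVariables false

/-! ### Auxiliary trigonometric function -/

noncomputable def qq (s : ℝ) : ℝ := (max 0 (Real.sin s)) ^ 2

noncomputable def FF (p : ℝ) (σ : ℕ → ℝ) (x : ℝ) : ℝ := (max 0 (Kp p σ x)) ^ 2

lemma Ep_eq (p : ℝ) (σ : ℕ → ℝ) : Ep p σ = ∫ x in Set.Ioi (0:ℝ), FF p σ x := rfl

lemma qq_nonneg (s : ℝ) : 0 ≤ qq s := sq_nonneg _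

lemma qq_cont : Continuous qq := ((continuous_const.max Real.continuous_sin).pow 2)

lemma qq_le_one (s : ℝ) : qq s ≤ 1 := by
  have h1 : max 0 (Real.sin s) ≤ 1 := max_le one_pos.le (Real.sin_le_one s)
  have h0 : 0 ≤ max 0 (Real.sin s) := le_max_left _ _
  calc (max 0 (Real.sin s))^2 ≤ 1^2 := pow_le_pow_left₀ h0 h1 2
  _ = 1 := one_pow 2

lemma qq_periodic : Function.Periodic qq (2 * π) := by
  intro s; unfold qq; rw [Real.sin_add_two_pi]

lemma qq_eq_zero {s : ℝ} (h1 : π ≤ s) (h2 : s ≤ 2 * π) : qq s = 0 := by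
  have : Real.sin s ≤ 0 := by
    have := Real.sin_nonneg_of_nonneg_of_le_pi (x := s - π) (by linarith) (by linarith)
    rw [Real.sin_sub_pi] at this; linarith
  unfold qq
  rw [max_eq_left this]
  norm_num

lemma qq_le_sq {s : ℝ} (h : 0 ≤ s) : qq s ≤ s ^ 2 := by
  unfold qq
  rcases le_or_gt (Real.sin s) 0 with hs | hs
  · rw [max_eq_left hs]; simp; positivity
  · rw [max_eq_right hs.le]
    have h1 : Real.sin s ≤ s := Real.sin_le h
    exact pow_le_pow_left₀ hs.le h1 2

section Cc
variable {c : ℝ} (hc1 : π ≤ c) (hc2 : c ≤ 2 * π)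
include hc1 hc2

lemma Qwin (y : ℝ) : (∫ s in y..(y + c), qq s) ≤ ∫ s in (0:ℝ)..c, qq s := by
  have hπ : (0:ℝ) < π := Real.pi_pos
  have h1 : (∫ s in y..(y + c), qq s) ≤ ∫ s in y..(y + 2*π), qq s := by
    apply intervalIntegral.integral_mono_interval (le_refl y) (by linarith) (by linarith)
    · filter_upwards with s using qq_nonneg s
    · exact qq_cont.intervalIntegrable _ _
  have h2 : (∫ s in y..(y + 2*π), qq s) = ∫ s in (0:ℝ)..(0 + 2*π), qq s :=
    qq_periodic.intervalIntegral_add_eq y 0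
  have h3 : (∫ s in (0:ℝ)..(0 + 2*π), qq s) = (∫ s in (0:ℝ)..c, qq s) + ∫ s in c..(2*π), qq s := by
    rw [zero_add]
    rw [intervalIntegral.integral_add_adjacent_intervals (qq_cont.intervalIntegrable _ _)
      (qq_cont.intervalIntegrable _ _)]
  have h4 : (∫ s in c..(2*π), qq s) = 0 := by
    have : EqOn qq 0 (uIcc c (2*π)) := by
      intro s hs
      rw [uIcc_of_le hc2] at hs
      exact qq_eq_zero (hc1.trans hs.1) hs.2
    rw [intervalIntegral.integral_congr this]; simp
  rw [h2, h3, h4, add_zero] at h1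
  exact h1

lemma H_nonneg {x : ℝ} (hx : 0 ≤ x) :
    0 ≤ ∫ s in (0:ℝ)..x, (qq (c * s) - qq (c * s + c)) := by
  have hπ : (0:ℝ) < π := Real.pi_pos
  have hc0 : (0:ℝ) < c := lt_of_lt_of_le hπ hc1
  have i1 : IntervalIntegrable (fun s => qq (c * s)) volume 0 x := by
    exact (qq_cont.comp (continuous_const.mul continuous_id)).intervalIntegrable _ _
  have i2 : IntervalIntegrable (fun s => qq (c * s + c)) volume 0 x := by
    exact (qq_cont.comp ((continuous_const.mul continuous_id).add
      continuous_const)).intervalIntegrable _ _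
  have e1 : (∫ s in (0:ℝ)..x, qq (c * s)) = c⁻¹ • ∫ s in (c*0)..(c*x), qq s :=
    intervalIntegral.integral_comp_mul_left qq hc0.ne'
  have e2 : (∫ s in (0:ℝ)..x, qq (c * s + c)) = c⁻¹ • ∫ s in (c*0+c)..(c*x+c), qq s :=
    intervalIntegral.integral_comp_mul_add qq hc0.ne' c
  rw [intervalIntegral.integral_sub i1 i2, e1, e2, ← smul_sub]
  apply smul_nonneg (by positivity)
  rw [sub_nonneg, mul_zero, zero_add]
  have hsplit : (∫ s in (0:ℝ)..(c*x+c), qq s)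
      = (∫ s in (0:ℝ)..c, qq s) + ∫ s in c..(c*x+c), qq s :=
    (intervalIntegral.integral_add_adjacent_intervals (qq_cont.intervalIntegrable _ _)
      (qq_cont.intervalIntegrable _ _)).symm
  have hsplit2 : (∫ s in (0:ℝ)..(c*x+c), qq s)
      = (∫ s in (0:ℝ)..(c*x), qq s) + ∫ s in (c*x)..(c*x+c), qq s :=
    (intervalIntegral.integral_add_adjacent_intervals (qq_cont.intervalIntegrable _ _)
      (qq_cont.intervalIntegrable _ _)).symm
  have := Qwin hc1 hc2 (c*x)
  linarith

lemma key_ineq {r L : ℝ} (hr : 1 ≤ r) (hL : 0 ≤ L) :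
    0 ≤ ∫ s in (0:ℝ)..L, (qq (c * s) - qq (c * s + c)) * (π * (s + r))⁻¹ ^ 2 := by
  have hπ : (0:ℝ) < π := Real.pi_pos
  set h : ℝ → ℝ := fun s => qq (c * s) - qq (c * s + c) with hh
  have hcont : Continuous h := by
    exact ((qq_cont.comp (continuous_const.mul continuous_id)).sub
      (qq_cont.comp ((continuous_const.mul continuous_id).add continuous_const)))
  set H : ℝ → ℝ := fun x => ∫ s in (0:ℝ)..x, h s with hH
  set W : ℝ → ℝ := fun s => (π * (s + r))⁻¹ ^ 2 with hW
  set W' : ℝ → ℝ := fun s => 2 * (π * (s + r))⁻¹ ^ 1 * (-π / (π * (s + r)) ^ 2) with hW'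
  have hWd : ∀ s ∈ uIcc (0:ℝ) L, HasDerivAt W (W' s) s := by
    intro s hs
    rw [uIcc_of_le hL] at hs
    have hpos : 0 < π * (s + r) := by
      have : 0 < s + r := by linarith [hs.1]
      positivity
    have h1 : HasDerivAt (fun u : ℝ => π * (u + r)) π s := by
      simpa using ((hasDerivAt_id s).add_const r).const_mul π
    have h2 : HasDerivAt (fun u : ℝ => (π * (u + r))⁻¹) (-π / (π * (s + r)) ^ 2) s :=
      h1.inv hpos.ne'
    exact h2.pow 2
  have hHd : ∀ x ∈ uIcc (0:ℝ) L, HasDerivAt H (h x) x := by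
    intro x _
    exact intervalIntegral.integral_hasDerivAt_right (hcont.intervalIntegrable _ _)
      (hcont.stronglyMeasurable.stronglyMeasurableAtFilter) hcont.continuousAt
  have hW'int : IntervalIntegrable W' volume 0 L := by
    apply ContinuousOn.intervalIntegrable
    apply ContinuousOn.mul
    · apply ContinuousOn.mul continuousOn_const
      apply ContinuousOn.pow
      apply ContinuousOn.inv₀ (by fun_prop)
      intro s hs
      rw [uIcc_of_le hL] at hs
      have : 0 < s + r := by linarith [hs.1]
      positivity
    · apply ContinuousOn.div continuousOn_const (by fun_prop)
      intro s hs
      rw [uIcc_of_le hL] at hs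
      have : 0 < s + r := by linarith [hs.1]
      positivity
  have hibp := intervalIntegral.integral_mul_deriv_eq_deriv_mul hWd hHd hW'int
    (hcont.intervalIntegrable _ _)
  -- hibp : ∫ s in 0..L, W s * h s = W L * H L - W 0 * H 0 - ∫ s in 0..L, W' s * H s
  have hgoal : (∫ s in (0:ℝ)..L, (qq (c * s) - qq (c * s + c)) * (π * (s + r))⁻¹ ^ 2)
      = ∫ s in (0:ℝ)..L, W s * h s := by
    apply intervalIntegral.integral_congr
    intro s _
    simp only [hW, hh]
    ring
  have hH0 : H 0 = 0 := intervalIntegral.integral_same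
  have hHL : 0 ≤ H L := H_nonneg hc1 hc2 hL
  have hWL : 0 ≤ W L := by positivity
  have hlast : 0 ≤ ∫ s in (0:ℝ)..L, -(W' s * H s) := by
    apply intervalIntegral.integral_nonneg hL
    intro u hu
    have hH : 0 ≤ H u := H_nonneg hc1 hc2 hu.1
    have hW' : W' u ≤ 0 := by
      have hpos : 0 < π * (u + r) := by
        have : 0 < u + r := by linarith [hu.1]
        positivity
      have h1 : 0 ≤ (π * (u + r))⁻¹ ^ 1 := by positivity
      have h2 : -π / (π * (u + r)) ^ 2 ≤ 0 := by
        apply div_nonpos_of_nonpos_of_nonneg (by linarith) (by positivity)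
      simp only [hW']
      exact mul_nonpos_of_nonneg_of_nonpos (by positivity) h2
    simpa using mul_nonneg (neg_nonneg.mpr hW') hH
  rw [intervalIntegral.integral_neg] at hlast
  rw [hgoal, hibp, hH0]
  nlinarith [mul_nonneg hWL hHL]
end Cc

section Kernel
variable {p : ℝ} {σ : ℕ → ℝ}

lemma Kp_eq_of_mem (hmono : StrictMono σ) {x : ℝ} {m : ℕ} (hm : x ∈ Set.Ioo (σ m) (σ (m+1))) :
    Kp p σ x = Real.sin (p / 2 * π * (x - m)) / (π * x) := by
  unfold Kp
  rw [tsum_eq_single m]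
  · rw [Set.indicator_of_mem hm]
  · intro n hn
    apply Set.indicator_of_notMem
    intro hx
    rcases lt_or_gt_of_ne hn with h | h
    · have : σ (n+1) ≤ σ m := hmono.monotone h
      exact absurd (hx.2.trans_le this) (not_lt.mpr hm.1.le)
    · have : σ (m+1) ≤ σ n := hmono.monotone h
      exact absurd (hm.2.trans_le this) (not_lt.mpr hx.1.le)

lemma Kp_eq_zero {x : ℝ} (h : ∀ n : ℕ, x ∉ Set.Ioo (σ n) (σ (n+1))) : Kp p σ x = 0 := by
  unfold Kp
  have : ∀ n : ℕ, (Set.Ioo (σ n) (σ (n + 1))).indicator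
      (fun y => Real.sin (p / 2 * π * (y - n)) / (π * y)) x = 0 :=
    fun n => Set.indicator_of_notMem (h n) _
  rw [tsum_congr this]
  exact tsum_zero

lemma FF_eq_of_mem (hmono : StrictMono σ) (h0 : σ 0 = 0) {x : ℝ} {m : ℕ}
    (hm : x ∈ Set.Ioo (σ m) (σ (m+1))) :
    FF p σ x = qq (p / 2 * π * (x - m)) * (π * x)⁻¹ ^ 2 := by
  have hx : 0 < x := by
    have : σ 0 ≤ σ m := hmono.monotone (Nat.zero_le m)
    calc (0:ℝ) = σ 0 := h0.symm
    _ ≤ σ m := this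
    _ < x := hm.1
  have hπx : 0 < π * x := by positivity
  unfold FF qq
  rw [Kp_eq_of_mem hmono hm]
  rcases le_or_gt (Real.sin (p / 2 * π * (x - m))) 0 with hs | hs
  · rw [max_eq_left (div_nonpos_of_nonpos_of_nonneg hs hπx.le), max_eq_left hs]
    simp
  · rw [max_eq_right (div_nonneg hs.le hπx.le), max_eq_right hs.le, div_pow]
    rw [inv_pow]
    field_simp

lemma FF_eq_zero {x : ℝ} (h : ∀ n : ℕ, x ∉ Set.Ioo (σ n) (σ (n+1))) : FF p σ x = 0 := by
  unfold FF
  rw [Kp_eq_zero h]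
  simp

lemma measurable_Kp (hten : ∀ x : ℝ, ∃ M : ℕ, ∀ n ≥ M, x ≤ σ n) : Measurable (Kp p σ) := by
  set f : ℕ → ℝ → ℝ := fun n => (Set.Ioo (σ n) (σ (n + 1))).indicator
    (fun y => Real.sin (p / 2 * π * (y - n)) / (π * y)) with hf
  have hfm : ∀ n, Measurable (f n) := by
    intro n
    apply Measurable.indicator _ measurableSet_Ioo
    fun_prop
  apply measurable_of_tendsto_metrizable (f := fun N x => ∑ n ∈ Finset.range N, f n x)
  · intro N
    exact Finset.measurable_sum _ fun n _ => hfm n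
  · rw [tendsto_pi_nhds]
    intro x
    obtain ⟨M, hM⟩ := hten x
    have hsupp : ∀ n ∉ Finset.range M, f n x = 0 := by
      intro n hn
      simp only [Finset.mem_range, not_lt] at hn
      apply Set.indicator_of_notMem
      intro hx
      exact absurd hx.1 (not_lt.mpr (hM n hn))
    have hsum : HasSum (fun n => f n x) (Kp p σ x) := by
      have : Summable fun n => f n x := summable_of_ne_finset_zero hsupp
      exact this.hasSum
    exact hsum.tendsto_sum_nat

lemma measurable_FF (hten : ∀ x : ℝ, ∃ M : ℕ, ∀ n ≥ M, x ≤ σ n) : Measurable (FF p σ) :=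
  ((measurable_const.max (measurable_Kp hten)).pow_const 2)

end Kernel

lemma FF_nonneg (p : ℝ) (σ : ℕ → ℝ) (x : ℝ) : 0 ≤ FF p σ x := sq_nonneg _

section TsetFacts
variable {δ₁ δ₂ : ℝ} {σ : ℕ → ℝ} (hδ1 : 0 < δ₁) (hδ2 : 0 < δ₂) (hσ : σ ∈ Tset δ₁ δ₂)
include hδ1 hδ2 hσ

lemma Tset_nonneg (n : ℕ) : 0 ≤ σ n := by
  obtain ⟨h0, hmono, -, -⟩ := hσ
  calc (0:ℝ) = σ 0 := h0.symm
  _ ≤ σ n := hmono.monotone (Nat.zero_le n)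

lemma Tset_pos {n : ℕ} (hn : 1 ≤ n) : δ₁ ≤ σ n := by
  obtain ⟨-, hmono, h1, -⟩ := hσ
  exact h1.trans (hmono.monotone hn)

lemma Tset_lin : ∀ k : ℕ, δ₁ + k * δ₂ ≤ σ (k + 1) := by
  obtain ⟨-, -, h1, hgap⟩ := hσ
  intro k
  induction k with
  | zero => simpa using h1
  | succ k ih =>
    have := hgap (k+1) (Nat.le_add_left 1 k)
    push_cast
    push_cast at ih
    linarith

lemma Tset_tendsto : ∀ x : ℝ, ∃ M : ℕ, ∀ n ≥ M, x ≤ σ n := by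
  intro x
  refine ⟨⌈(x - δ₁) / δ₂⌉₊ + 1, fun n hn => ?_⟩
  obtain ⟨k, rfl⟩ := Nat.exists_eq_add_of_le hn
  have hk : ((x - δ₁) / δ₂ : ℝ) ≤ (⌈(x - δ₁) / δ₂⌉₊ + k : ℕ) := by
    calc ((x - δ₁) / δ₂ : ℝ) ≤ (⌈(x - δ₁) / δ₂⌉₊ : ℕ) := Nat.le_ceil _
    _ ≤ ((⌈(x - δ₁) / δ₂⌉₊ + k : ℕ) : ℝ) := by push_cast; linarith [Nat.cast_nonneg (α := ℝ) k]
  have h2 : x - δ₁ ≤ (⌈(x - δ₁) / δ₂⌉₊ + k : ℕ) * δ₂ := by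
    rw [div_le_iff₀ hδ2] at hk
    exact hk
  have := Tset_lin hδ1 hδ2 hσ (⌈(x - δ₁) / δ₂⌉₊ + k)
  have harr : ⌈(x - δ₁) / δ₂⌉₊ + 1 + k = (⌈(x - δ₁) / δ₂⌉₊ + k) + 1 := by omega
  rw [harr]
  push_cast at this h2 ⊢
  linarith

lemma FF_le_inv_sq {p : ℝ} {x : ℝ} : FF p σ x ≤ (π * x)⁻¹ ^ 2 := by
  obtain ⟨h0, hmono, -, -⟩ := hσ
  by_cases h : ∃ m : ℕ, x ∈ Set.Ioo (σ m) (σ (m+1))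
  · obtain ⟨m, hm⟩ := h
    rw [FF_eq_of_mem hmono h0 hm]
    calc qq (p / 2 * π * (x - m)) * (π * x)⁻¹ ^ 2 ≤ 1 * (π * x)⁻¹ ^ 2 := by
          apply mul_le_mul_of_nonneg_right (qq_le_one _) (by positivity)
    _ = (π * x)⁻¹ ^ 2 := one_mul _
  · push_neg at h
    rw [FF_eq_zero h]
    positivity

lemma FF_le_four {p : ℝ} (hp0 : 0 ≤ p) (hp4 : p ≤ 4) {x : ℝ} (hx : 0 < x) (hx1 : x < σ 1) :
    FF p σ x ≤ 4 := by
  obtain ⟨h0, hmono, -, -⟩ := hσ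
  have hπ : (0:ℝ) < π := Real.pi_pos
  by_cases h : ∃ m : ℕ, x ∈ Set.Ioo (σ m) (σ (m+1))
  · obtain ⟨m, hm⟩ := h
    have hm0 : m = 0 := by
      by_contra hne
      have : σ 1 ≤ σ m := hmono.monotone (Nat.one_le_iff_ne_zero.mpr hne)
      linarith [hm.1]
    subst hm0
    rw [FF_eq_of_mem hmono h0 hm]
    have hq : qq (p / 2 * π * (x - (0:ℕ))) ≤ (p / 2 * π * x) ^ 2 := by
      have harg : p / 2 * π * (x - (0:ℕ)) = p / 2 * π * x := by push_cast; ring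
      rw [harg]
      exact qq_le_sq (by positivity)
    have hπx : (π * x) ≠ 0 := by positivity
    calc qq (p / 2 * π * (x - (0:ℕ))) * (π * x)⁻¹ ^ 2
        ≤ (p / 2 * π * x) ^ 2 * (π * x)⁻¹ ^ 2 := by
          apply mul_le_mul_of_nonneg_right hq (by positivity)
    _ = (p / 2) ^ 2 := by field_simp
    _ ≤ 4 := by nlinarith
  · push_neg at h
    rw [FF_eq_zero h]
    norm_num

lemma integrable_FF {p : ℝ} (hp0 : 0 ≤ p) (hp4 : p ≤ 4) :
    IntegrableOn (FF p σ) (Set.Ioi (0:ℝ)) := by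
  have hσ1 : 0 < σ 1 := lt_of_lt_of_le hδ1 (Tset_pos hδ1 hδ2 hσ le_rfl)
  set D : ℝ → ℝ := fun x => (Set.Ioo (0:ℝ) (σ 1)).indicator (fun _ => (4:ℝ)) x
    + (Set.Ici (σ 1)).indicator (fun x => (π * x)⁻¹ ^ 2) x with hD
  have hD1 : Integrable ((Set.Ioo (0:ℝ) (σ 1)).indicator (fun _ => (4:ℝ))) := by
    rw [integrable_indicator_iff measurableSet_Ioo]
    exact integrableOn_const measure_Ioo_lt_top.ne
  have hD2 : Integrable ((Set.Ici (σ 1)).indicator (fun x : ℝ => (π * x)⁻¹ ^ 2)) := by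
    rw [integrable_indicator_iff measurableSet_Ici]
    rw [integrableOn_Ici_iff_integrableOn_Ioi]
    have hbase : IntegrableOn (fun x : ℝ => π⁻¹ ^ 2 * x ^ (-2:ℝ)) (Set.Ioi (σ 1)) :=
      (integrableOn_Ioi_rpow_of_lt (by norm_num) hσ1).const_mul _
    apply hbase.congr_fun _ measurableSet_Ioi
    intro x hx
    have hx0 : 0 < x := hσ1.trans hx
    simp only
    rw [show ((-2):ℝ) = -((2:ℕ):ℝ) by norm_num, Real.rpow_neg hx0.le, Real.rpow_natCast]
    field_simp
  have hDint : Integrable D := hD1.add hD2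
  apply Integrable.mono' hDint.integrableOn
  · exact (measurable_FF (Tset_tendsto hδ1 hδ2 hσ)).aestronglyMeasurable
  · rw [ae_restrict_iff' measurableSet_Ioi]
    filter_upwards with x hx
    rw [Real.norm_of_nonneg (FF_nonneg p σ x)]
    rcases lt_or_ge x (σ 1) with hlt | hge
    · have e1 : (Set.Ioo (0:ℝ) (σ 1)).indicator (fun _ => (4:ℝ)) x = 4 :=
        Set.indicator_of_mem (Set.mem_Ioo.mpr ⟨hx, hlt⟩) _
      have e2 : (Set.Ici (σ 1)).indicator (fun x : ℝ => (π * x)⁻¹ ^ 2) x = 0 :=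
        Set.indicator_of_notMem (by simpa using hlt) _
      rw [hD]; simp only [e1, e2, add_zero]
      exact FF_le_four hδ1 hδ2 hσ hp0 hp4 hx hlt
    · have e1 : (Set.Ioo (0:ℝ) (σ 1)).indicator (fun _ => (4:ℝ)) x = 0 :=
        Set.indicator_of_notMem (fun hmem => absurd hmem.2 (not_lt.mpr hge)) _
      have e2 : (Set.Ici (σ 1)).indicator (fun x : ℝ => (π * x)⁻¹ ^ 2) x = (π * x)⁻¹ ^ 2 :=
        Set.indicator_of_mem hge _
      rw [hD]; simp only [e1, e2, zero_add]
      exact FF_le_inv_sq hδ1 hδ2 hσ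

end TsetFacts

noncomputable def TT (τ : ℕ → ℝ) (N : ℕ) : ℕ → ℝ := fun n => if n ≤ N then min (τ n) n else τ n

section Trunc
variable {δ₁ δ₂ : ℝ} {τ : ℕ → ℝ} (hδ1 : 0 < δ₁) (hδ1' : δ₁ ≤ 1) (hδ2 : 0 < δ₂) (hδ2' : δ₂ ≤ 1)
  (hτ : τ ∈ Tset δ₁ δ₂)
include hδ1 hδ1' hδ2 hδ2' hτ

omit hδ1 hδ1' hδ2 hδ2' hτ in
lemma TT_zero (h0 : τ 0 = 0) : TT τ 0 = τ := by
  funext n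
  unfold TT
  cases n with
  | zero => simp [h0]
  | succ n => simp

omit hδ1 hδ1' hδ2 hδ2' hτ in
lemma TT_eq_min {N n : ℕ} (h : n ≤ N) : TT τ N n = min (τ n) n := if_pos h

omit hδ1 hδ1' hδ2 hδ2' hτ in
lemma TT_eq_tau {N n : ℕ} (h : N < n) : TT τ N n = τ n := if_neg (by omega)

lemma min_mem_Tset : (fun n => min (τ n) (n:ℝ)) ∈ Tset δ₁ δ₂ := by
  obtain ⟨h0, hmono, h1, hgap⟩ := hτ
  refine ⟨?_, ?_, ?_, ?_⟩
  · simp [h0]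
  · apply strictMono_nat_of_lt_succ
    intro n
    apply lt_min
    · exact lt_of_le_of_lt (min_le_left _ _) (hmono (Nat.lt_succ_self n))
    · apply lt_of_le_of_lt (min_le_right _ _)
      push_cast
      linarith
  · simp only [Nat.cast_one]
    exact le_min h1 hδ1'
  · intro n hn
    show δ₂ ≤ min (τ (n+1)) (((n+1:ℕ)):ℝ) - min (τ n) ((n:ℕ):ℝ)
    rcases le_total (τ (n+1)) ((n+1 : ℕ) : ℝ) with h | h
    · rw [min_eq_left h]
      have := hgap n hn
      have h2 : min (τ n) (n:ℝ) ≤ τ n := min_le_left _ _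
      linarith
    · rw [min_eq_right h]
      have h2 : min (τ n) (n:ℝ) ≤ (n:ℝ) := min_le_right _ _
      push_cast
      linarith

lemma TT_mem_Tset (N : ℕ) : TT τ N ∈ Tset δ₁ δ₂ := by
  obtain ⟨h0, hmono, h1, hgap⟩ := hτ
  have hmin := min_mem_Tset hδ1 hδ1' hδ2 hδ2' ⟨h0, hmono, h1, hgap⟩
  obtain ⟨m0, mmono, m1, mgap⟩ := hmin
  refine ⟨?_, ?_, ?_, ?_⟩
  · rw [TT_eq_min (Nat.zero_le N)]
    exact m0
  · apply strictMono_nat_of_lt_succ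
    intro n
    by_cases h2 : n + 1 ≤ N
    · rw [TT_eq_min (show n ≤ N by omega), TT_eq_min h2]
      exact mmono (Nat.lt_succ_self n)
    · by_cases h3 : n ≤ N
      · rw [TT_eq_min h3, TT_eq_tau (show N < n+1 by omega)]
        exact lt_of_le_of_lt (min_le_left _ _) (hmono (Nat.lt_succ_self n))
      · rw [TT_eq_tau (show N < n by omega), TT_eq_tau (show N < n+1 by omega)]
        exact hmono (Nat.lt_succ_self n)
  · by_cases h2 : 1 ≤ N
    · rw [TT_eq_min h2]; exact m1
    · rw [TT_eq_tau (show N < 1 by omega)]; exact h1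
  · intro n hn
    by_cases h2 : n + 1 ≤ N
    · rw [TT_eq_min (show n ≤ N by omega), TT_eq_min h2]
      simpa using mgap n hn
    · by_cases h3 : n ≤ N
      · rw [TT_eq_min h3, TT_eq_tau (show N < n+1 by omega)]
        have := hgap n hn
        have h4 : min (τ n) (n:ℝ) ≤ τ n := min_le_left _ _
        linarith
      · rw [TT_eq_tau (show N < n by omega), TT_eq_tau (show N < n+1 by omega)]
        exact hgap n hn

end Trunc

lemma ind_congr {x : ℝ} {s t : Set ℝ} (f : ℝ → ℝ) (h : x ∈ s ↔ x ∈ t) :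
    s.indicator f x = t.indicator f x := by
  by_cases hs : x ∈ s
  · rw [Set.indicator_of_mem hs, Set.indicator_of_mem (h.mp hs)]
  · rw [Set.indicator_of_notMem hs, Set.indicator_of_notMem (fun ht => hs (h.mpr ht))]

lemma step_ineq {p δ₁ δ₂ : ℝ} (hp2 : 2 ≤ p) (hp4 : p ≤ 4) (hδ1 : 0 < δ₁) (hδ1' : δ₁ ≤ 1)
    (hδ2 : 0 < δ₂) (hδ2' : δ₂ ≤ 1) {τ : ℕ → ℝ} (hτ : τ ∈ Tset δ₁ δ₂) (N : ℕ) :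
    Ep p (TT τ N) ≤ Ep p (TT τ (N+1)) := by
  have hπ : (0:ℝ) < π := Real.pi_pos
  by_cases hceq : τ (N+1) ≤ ((N+1:ℕ):ℝ)
  · have heq : TT τ (N+1) = TT τ N := by
      funext n
      by_cases h1 : n ≤ N
      · rw [TT_eq_min h1, TT_eq_min (show n ≤ N+1 by omega)]
      · by_cases h2 : n = N+1
        · subst h2
          rw [TT_eq_min (le_refl (N+1)), TT_eq_tau (Nat.lt_succ_self N)]
          exact min_eq_left hceq
        · rw [TT_eq_tau (show N+1 < n by omega), TT_eq_tau (show N < n by omega)]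
    rw [heq]
  · push_neg at hceq
    set r : ℝ := ((N+1:ℕ):ℝ) with hr
    set c : ℝ := τ (N+1) with hcdef
    have hrc : r < c := hceq
    have hr1 : (1:ℝ) ≤ r := by rw [hr]; push_cast; linarith [Nat.cast_nonneg (α := ℝ) N]
    set A := TT τ N with hA
    set B := TT τ (N+1) with hB
    have hAmem : A ∈ Tset δ₁ δ₂ := TT_mem_Tset hδ1 hδ1' hδ2 hδ2' hτ N
    have hBmem : B ∈ Tset δ₁ δ₂ := TT_mem_Tset hδ1 hδ1' hδ2 hδ2' hτ (N+1)
    have hA0 := hAmem.1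
    have hAmono := hAmem.2.1
    have hB0 := hBmem.1
    have hBmono := hBmem.2.1
    have hτmono := hτ.2.1
    have hAN1 : A (N+1) = c := TT_eq_tau (Nat.lt_succ_self N)
    have hBN1 : B (N+1) = r := by
      rw [hB, TT_eq_min (le_refl (N+1))]
      exact min_eq_right hceq.le
    have hBN2 : B (N+2) = τ (N+2) := TT_eq_tau (by omega)
    have hAN2 : A (N+2) = τ (N+2) := TT_eq_tau (by omega)
    have hBAn : ∀ n, n ≤ N → B n = A n := by
      intro n hn
      rw [hA, hB, TT_eq_min hn, TT_eq_min (show n ≤ N+1 by omega)]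
    have hBAtau : ∀ n, N+1 < n → B n = A n := by
      intro n hn
      rw [hA, hB, TT_eq_tau hn, TT_eq_tau (show N < n by omega)]
    -- Kp agrees off [r, c]
    have hoff : ∀ x : ℝ, x ∉ Set.Icc r c → FF p B x = FF p A x := by
      intro x hx
      have hx' : x < r ∨ c < x := by
        rcases lt_or_ge x r with h | h
        · exact Or.inl h
        · rcases le_or_gt x c with h2 | h2
          · exact absurd ⟨h, h2⟩ hx
          · exact Or.inr h2
      have hKp : Kp p B x = Kp p A x := by
        unfold Kp
        apply tsum_congr
        intro n
        by_cases hn1 : n + 1 ≤ N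
        · rw [hBAn n (by omega), hBAn (n+1) hn1]
        · by_cases hn2 : n = N
          · subst hn2
            rw [hBAn n le_rfl, hAN1, hBN1]
            apply ind_congr
            constructor
            · rintro ⟨hl, hu⟩
              exact ⟨hl, by linarith⟩
            · rintro ⟨hl, hu⟩
              rcases hx' with h | h
              · exact ⟨hl, by linarith⟩
              · exfalso; linarith
          · by_cases hn3 : n = N + 1
            · subst hn3
              rw [hBAtau (N+1+1) (by omega), hAN1, hBN1]
              apply ind_congr
              constructor
              · rintro ⟨hl, hu⟩
                rcases hx' with h | h
                · exfalso; linarith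
                · exact ⟨by linarith, hu⟩
              · rintro ⟨hl, hu⟩
                exact ⟨by linarith, hu⟩
            · rw [hBAtau n (by omega), hBAtau (n+1) (by omega)]
      unfold FF
      rw [hKp]
    -- values on (r, c)
    have hAval : ∀ x ∈ Set.Ioo r c, FF p A x = qq (p / 2 * π * (x - (N:ℕ))) * (π * x)⁻¹ ^ 2 := by
      intro x hxm
      apply FF_eq_of_mem hAmono hA0
      constructor
      · have h1 : A N ≤ (N:ℝ) := by
          rw [hA, TT_eq_min le_rfl]; exact min_le_right _ _
        have h2 : (N:ℝ) < r := by rw [hr]; push_cast; linarith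
        calc A N ≤ (N:ℝ) := h1
        _ < r := h2
        _ < x := hxm.1
      · rw [hAN1]; exact hxm.2
    have hBval : ∀ x ∈ Set.Ioo r c, FF p B x = qq (p / 2 * π * (x - ((N+1:ℕ):ℝ))) * (π * x)⁻¹ ^ 2 := by
      intro x hxm
      have := FF_eq_of_mem (p := p) hBmono hB0 (m := N+1) (x := x) ?_
      · exact this
      · constructor
        · rw [hBN1]; exact hxm.1
        · rw [hBN2]
          calc x < c := hxm.2
          _ = τ (N+1) := hcdef
          _ < τ (N+2) := hτmono (Nat.lt_succ_self (N+1))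
    -- integrability
    have intA : IntegrableOn (FF p A) (Set.Ioi (0:ℝ)) :=
      integrable_FF hδ1 hδ2 (TT_mem_Tset hδ1 hδ1' hδ2 hδ2' hτ N) (by linarith) hp4
    have intB : IntegrableOn (FF p B) (Set.Ioi (0:ℝ)) :=
      integrable_FF hδ1 hδ2 (TT_mem_Tset hδ1 hδ1' hδ2 hδ2' hτ (N+1)) (by linarith) hp4
    -- difference of integrals
    have hsub : Ep p B - Ep p A = ∫ x in Set.Ioi (0:ℝ), (FF p B x - FF p A x) := by
      rw [Ep_eq, Ep_eq, integral_sub intB intA]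
    have hnull : volume ({r, c} : Set ℝ) = 0 := (Set.toFinite ({r, c} : Set ℝ)).measure_zero volume
    have hae : (fun x => FF p B x - FF p A x)
        =ᵐ[volume.restrict (Set.Ioi (0:ℝ))]
        (Set.Ioo r c).indicator (fun x => FF p B x - FF p A x) := by
      apply ae_restrict_of_ae
      have hmem : ∀ᵐ x ∂(volume : Measure ℝ), x ∉ ({r, c} : Set ℝ) := by
        rw [← MeasureTheory.measure_eq_zero_iff_ae_notMem]
        exact hnull
      filter_upwards [hmem] with x hxne
      by_cases hmem2 : x ∈ Set.Ioo r c
      · rw [Set.indicator_of_mem hmem2]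
      · rw [Set.indicator_of_notMem hmem2]
        have hnic : x ∉ Set.Icc r c := by
          intro hic
          apply hmem2
          constructor
          · rcases hic.1.lt_or_eq with h | h
            · exact h
            · exact absurd h.symm (fun hh => hxne (Or.inl hh))
          · rcases hic.2.lt_or_eq with h | h
            · exact h
            · exact absurd h (fun hh => hxne (Or.inr hh))
        rw [hoff x hnic, sub_self]
    have hintermed : (∫ x in Set.Ioi (0:ℝ), (FF p B x - FF p A x))
        = ∫ x in Set.Ioo r c, (FF p B x - FF p A x) := by
      have hss : Set.Ioo r c ⊆ Set.Ioi (0:ℝ) := fun y hy => lt_trans (by linarith [hy.1]) hy.1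
      rw [integral_congr_ae hae, integral_indicator measurableSet_Ioo,
        Measure.restrict_restrict measurableSet_Ioo,
        Set.inter_eq_self_of_subset_left hss]
    have hval : (∫ x in Set.Ioo r c, (FF p B x - FF p A x))
        = ∫ x in Set.Ioo r c, (qq (p / 2 * π * (x - r)) - qq (p / 2 * π * (x - r) + p / 2 * π)) * (π * x)⁻¹ ^ 2 := by
      apply setIntegral_congr_fun measurableSet_Ioo
      intro x hxm
      show FF p B x - FF p A x = _
      rw [hBval x hxm, hAval x hxm]
      have e1 : p / 2 * π * (x - ((N+1:ℕ):ℝ)) = p / 2 * π * (x - r) := by rw [hr]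
      have e2 : p / 2 * π * (x - (N:ℕ)) = p / 2 * π * (x - r) + p / 2 * π := by
        rw [hr]; push_cast; ring
      rw [e1, e2]
      ring
    -- as interval integral and substitution
    have hIoc : (∫ x in Set.Ioo r c, (qq (p / 2 * π * (x - r)) - qq (p / 2 * π * (x - r) + p / 2 * π)) * (π * x)⁻¹ ^ 2)
        = ∫ x in r..c, (qq (p / 2 * π * (x - r)) - qq (p / 2 * π * (x - r) + p / 2 * π)) * (π * x)⁻¹ ^ 2 := by
      rw [intervalIntegral.integral_of_le hrc.le, MeasureTheory.integral_Ioc_eq_integral_Ioo]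
    set G : ℝ → ℝ := fun s => (qq (p / 2 * π * s) - qq (p / 2 * π * s + p / 2 * π)) * (π * (s + r))⁻¹ ^ 2 with hG
    have hcomp : (∫ x in r..c, (qq (p / 2 * π * (x - r)) - qq (p / 2 * π * (x - r) + p / 2 * π)) * (π * x)⁻¹ ^ 2)
        = ∫ x in r..c, G (x - r) := by
      apply intervalIntegral.integral_congr
      intro x _
      rw [hG]
      simp only
      have : x - r + r = x := by ring
      rw [this]
    have hsubst : (∫ x in r..c, G (x - r)) = ∫ s in (0:ℝ)..(c - r), G s := by
      rw [intervalIntegral.integral_comp_sub_right G r, sub_self]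
    have hkey : 0 ≤ ∫ s in (0:ℝ)..(c - r), G s := by
      rw [hG]
      have hc1 : π ≤ p / 2 * π := by nlinarith
      have hc2 : p / 2 * π ≤ 2 * π := by nlinarith
      exact key_ineq hc1 hc2 hr1 (show (0:ℝ) ≤ c - r by linarith)
    have : 0 ≤ Ep p B - Ep p A := by
      rw [hsub, hintermed, hval, hIoc, hcomp, hsubst]
      exact hkey
    linarith

lemma integrable_tail_ind {a : ℝ} (ha : 0 < a) :
    Integrable ((Set.Ici a).indicator (fun x : ℝ => 2 * (π * x)⁻¹ ^ 2)) := by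
  rw [integrable_indicator_iff measurableSet_Ici, integrableOn_Ici_iff_integrableOn_Ioi]
  have hbase : IntegrableOn (fun x : ℝ => 2 * π⁻¹ ^ 2 * x ^ (-2:ℝ)) (Set.Ioi a) :=
    (integrableOn_Ioi_rpow_of_lt (by norm_num) ha).const_mul _
  apply hbase.congr_fun _ measurableSet_Ioi
  intro x hx
  have hx0 : 0 < x := ha.trans hx
  simp only
  rw [show ((-2):ℝ) = -((2:ℕ):ℝ) by norm_num, Real.rpow_neg hx0.le, Real.rpow_natCast]
  field_simp

lemma integral_tail {a : ℝ} (ha : 0 < a) :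
    (∫ x in Set.Ici a, 2 * (π * x)⁻¹ ^ 2) = 2 * π⁻¹ ^ 2 * a⁻¹ := by
  rw [MeasureTheory.integral_Ici_eq_integral_Ioi]
  have hcg : ∀ x ∈ Set.Ioi a, 2 * (π * x)⁻¹ ^ 2 = (2 * π⁻¹ ^ 2) * x ^ (-2:ℝ) := by
    intro x hx
    have hx0 : 0 < x := ha.trans hx
    rw [show ((-2):ℝ) = -((2:ℕ):ℝ) by norm_num, Real.rpow_neg hx0.le, Real.rpow_natCast]
    field_simp
  rw [setIntegral_congr_fun measurableSet_Ioi hcg, integral_const_mul,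
    integral_Ioi_rpow_of_lt (by norm_num) ha]
  rw [show ((-2):ℝ) + 1 = -1 by norm_num, Real.rpow_neg_one]
  field_simp

section Tail
variable {p δ₁ δ₂ : ℝ} (hp2 : 2 ≤ p) (hp4 : p ≤ 4) (hδ1 : 0 < δ₁) (hδ1' : δ₁ ≤ 1)
    (hδ2 : 0 < δ₂) (hδ2' : δ₂ ≤ 1) {τ : ℕ → ℝ} (hτ : τ ∈ Tset δ₁ δ₂)
include hp2 hp4 hδ1 hδ1' hδ2 hδ2' hτ

lemma prefix_eq (N : ℕ) {x : ℝ} (hx : x < min (τ N) (N:ℝ)) :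
    FF p (TT τ N) x = FF p (fun n => min (τ n) (n:ℝ)) x := by
  have hTmono := (TT_mem_Tset hδ1 hδ1' hδ2 hδ2' hτ N).2.1
  have hγmono := (min_mem_Tset hδ1 hδ1' hδ2 hδ2' hτ).2.1
  have hKp : Kp p (TT τ N) x = Kp p (fun n => min (τ n) (n:ℝ)) x := by
    unfold Kp
    apply tsum_congr
    intro n
    by_cases hn : n + 1 ≤ N
    · rw [TT_eq_min (show n ≤ N by omega), TT_eq_min hn]
    · -- n ≥ N : both indicators vanish
      have h1 : x ∉ Set.Ioo (TT τ N n) (TT τ N (n+1)) := by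
        intro hmem
        have : TT τ N N ≤ TT τ N n := hTmono.monotone (by omega)
        rw [TT_eq_min le_rfl] at this
        exact absurd (this.trans_lt hmem.1) (not_lt.mpr hx.le)
      have h2 : x ∉ Set.Ioo (min (τ n) (n:ℝ)) (min (τ (n+1)) ((n+1:ℕ):ℝ)) := by
        intro hmem
        have h3 : min (τ N) ((N:ℕ):ℝ) ≤ min (τ n) (n:ℝ) := by
          have := hγmono.monotone (show N ≤ n by omega)
          simpa using this
        exact absurd (h3.trans_lt hmem.1) (not_lt.mpr hx.le)
      rw [Set.indicator_of_notMem h1, Set.indicator_of_notMem h2]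
  unfold FF
  rw [hKp]

lemma tail_bound {N : ℕ} (hN : 1 ≤ N) :
    Ep p (TT τ N) ≤ Ep p (fun n => min (τ n) (n:ℝ)) + 2 * π⁻¹ ^ 2 * (min (τ N) (N:ℝ))⁻¹ := by
  set γ : ℕ → ℝ := fun n => min (τ n) (n:ℝ) with hγ
  have hγmem : γ ∈ Tset δ₁ δ₂ := min_mem_Tset hδ1 hδ1' hδ2 hδ2' hτ
  have hTmem : TT τ N ∈ Tset δ₁ δ₂ := TT_mem_Tset hδ1 hδ1' hδ2 hδ2' hτ N
  set a : ℝ := min (τ N) (N:ℝ) with ha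
  have ha0 : 0 < a := by
    have := Tset_pos hδ1 hδ2 hγmem hN
    calc (0:ℝ) < δ₁ := hδ1
    _ ≤ γ N := this
    _ = a := rfl
  have intT : IntegrableOn (FF p (TT τ N)) (Set.Ioi (0:ℝ)) :=
    integrable_FF hδ1 hδ2 hTmem (by linarith) hp4
  have intγ : IntegrableOn (FF p γ) (Set.Ioi (0:ℝ)) :=
    integrable_FF hδ1 hδ2 hγmem (by linarith) hp4
  have hmono : (∫ x in Set.Ioi (0:ℝ), (FF p (TT τ N) x - FF p γ x))
      ≤ ∫ x in Set.Ioi (0:ℝ), (Set.Ici a).indicator (fun x : ℝ => 2 * (π * x)⁻¹ ^ 2) x := by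
    apply integral_mono_ae (intT.sub intγ) (integrable_tail_ind ha0).integrableOn
    rw [Filter.EventuallyLE, ae_restrict_iff' measurableSet_Ioi]
    filter_upwards with x hx
    rcases lt_or_ge x a with hlt | hge
    · have heq := prefix_eq hp2 hp4 hδ1 hδ1' hδ2 hδ2' hτ N hlt
      show FF p (TT τ N) x - FF p γ x ≤ _
      rw [heq, sub_self]
      exact Set.indicator_nonneg (fun y _ => by positivity) x
    · have e1 : (Set.Ici a).indicator (fun x : ℝ => 2 * (π * x)⁻¹ ^ 2) x = 2 * (π * x)⁻¹ ^ 2 :=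
        Set.indicator_of_mem hge _
      rw [e1]
      have h1 : FF p (TT τ N) x ≤ (π * x)⁻¹ ^ 2 := FF_le_inv_sq hδ1 hδ2 hTmem
      have h2 : 0 ≤ FF p γ x := FF_nonneg p γ x
      have h3 : 0 ≤ (π * x)⁻¹ ^ 2 := sq_nonneg _
      show FF p (TT τ N) x - FF p γ x ≤ _
      linarith
  have hrhs : (∫ x in Set.Ioi (0:ℝ), (Set.Ici a).indicator (fun x : ℝ => 2 * (π * x)⁻¹ ^ 2) x)
      = 2 * π⁻¹ ^ 2 * a⁻¹ := by
    have hss : Set.Ici a ⊆ Set.Ioi (0:ℝ) := fun y hy => lt_of_lt_of_le ha0 hy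
    rw [integral_indicator measurableSet_Ici, Measure.restrict_restrict measurableSet_Ici,
      Set.inter_eq_self_of_subset_left hss]
    exact integral_tail ha0
  have hdiff : (∫ x in Set.Ioi (0:ℝ), (FF p (TT τ N) x - FF p γ x))
      = Ep p (TT τ N) - Ep p γ := by
    rw [integral_sub intT intγ, Ep_eq, Ep_eq]
  rw [hdiff, hrhs] at hmono
  linarith

lemma Ep_le_TT (N : ℕ) : Ep p τ ≤ Ep p (TT τ N) := by
  induction N with
  | zero => rw [TT_zero hτ.1]
  | succ N ih => exact ih.trans (step_ineq hp2 hp4 hδ1 hδ1' hδ2 hδ2' hτ N)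

lemma Ep_le_min : Ep p τ ≤ Ep p (fun n => min (τ n) (n:ℝ)) := by
  set γ : ℕ → ℝ := fun n => min (τ n) (n:ℝ) with hγ
  have hγmem : γ ∈ Tset δ₁ δ₂ := min_mem_Tset hδ1 hδ1' hδ2 hδ2' hτ
  apply le_of_forall_pos_le_add
  intro ε hε
  have hπ : (0:ℝ) < π := Real.pi_pos
  set b : ℝ := 2 * π⁻¹ ^ 2 / ε with hb
  have hb0 : 0 < b := by positivity
  obtain ⟨M, hM⟩ := Tset_tendsto hδ1 hδ2 hγmem b
  set N : ℕ := max M 1 with hN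
  have hN1 : 1 ≤ N := le_max_right _ _
  have hγN : b ≤ γ N := hM N (le_max_left _ _)
  have h1 : Ep p τ ≤ Ep p (TT τ N) := Ep_le_TT hp2 hp4 hδ1 hδ1' hδ2 hδ2' hτ N
  have h2 := tail_bound hp2 hp4 hδ1 hδ1' hδ2 hδ2' hτ hN1
  have h3 : 2 * π⁻¹ ^ 2 * (min (τ N) (N:ℝ))⁻¹ ≤ ε := by
    have hγN' : b ≤ min (τ N) (N:ℝ) := hγN
    have hpos : 0 < min (τ N) (N:ℝ) := lt_of_lt_of_le hb0 hγN'
    have hinv : (min (τ N) (N:ℝ))⁻¹ ≤ b⁻¹ := by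
      apply inv_anti₀ hb0 hγN'
    calc 2 * π⁻¹ ^ 2 * (min (τ N) (N:ℝ))⁻¹ ≤ 2 * π⁻¹ ^ 2 * b⁻¹ := by
          apply mul_le_mul_of_nonneg_left hinv (by positivity)
    _ = ε := by rw [hb]; field_simp
  calc Ep p τ ≤ Ep p (TT τ N) := h1
  _ ≤ Ep p γ + 2 * π⁻¹ ^ 2 * (min (τ N) (N:ℝ))⁻¹ := h2
  _ ≤ Ep p γ + ε := by linarith

end Tail

theorem stmt11 (p δ₁ δ₂ : ℝ) (hp2 : 2 ≤ p) (hp4 : p ≤ 4)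
    (hδ1 : 0 < δ₁) (hδ1' : δ₁ ≤ 1) (hδ2 : 0 < δ₂) (hδ2' : δ₂ ≤ 1)
    (τ : ℕ → ℝ) (hτ : τ ∈ Tset δ₁ δ₂)
    (γ : ℕ → ℝ) (hγ : ∀ n : ℕ, γ n = min (τ n) n) :
    γ ∈ Tset δ₁ δ₂ ∧ Ep p τ ≤ Ep p γ := by
  have hγfun : γ = fun n => min (τ n) (n:ℝ) := funext hγ
  constructor
  · rw [hγfun]
    exact min_mem_Tset hδ1 hδ1' hδ2 hδ2' hτ
  · rw [hγfun]
    exact Ep_le_min hp2 hp4 hδ1 hδ1' hδ2 hδ2' hτ
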